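/- Let h > 0 and let z ∈ ℂ satisfy Im z > 0. Then the operator −Δ_h − z·I on ℓ²(ℤ, ℂ) is boundedly invertible, and its inverse is the convolution operator with kernel r_h: for every φ ∈ ℓ²(ℤ, ℂ) and every n ∈ ℤ, ((−Δ_h − z·I)⁻¹ φ)(n) = ∑_{m ∈ ℤ} r_h(z, n − m) · φ(m), the series on the right converging absolutely. -/

import Mathlib

/-- Principal complex square root `w^{1/2} = exp((1/2)·Log w)`. -/
noncomputable def csqrt (w : ℂ) : ℂ := Complex.exp ((1 / 2 : ℂ) * Complex.log w)

/-- Principal complex arcsine `Arcsin s = −i·Log(i·s + (1 − s²)^{1/2})`. -/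
noncomputable def carcsin (s : ℂ) : ℂ :=
  -Complex.I * Complex.log (Complex.I * s + csqrt (1 - s ^ 2))

/-- The resolvent kernel
`r_h(z, k) = i·exp(2·i·|k|·Arcsin((h/2)·z^{1/2})) / (z^{1/2}·(4/h² − z)^{1/2})`. -/
noncomputable def rker (h : ℝ) (z : ℂ) (k : ℤ) : ℂ :=
  Complex.I * Complex.exp (2 * Complex.I * ((|k| : ℤ) : ℂ) * carcsin ((h / 2 : ℂ) * csqrt z)) /
    (csqrt z * csqrt (4 / (h : ℂ) ^ 2 - z))

lemma csqrt_ne_zero (w : ℂ) : csqrt w ≠ 0 := Complex.exp_ne_zero _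

lemma csqrt_sq {w : ℂ} (hw : w ≠ 0) : csqrt w ^ 2 = w := by
  rw [csqrt, ← Complex.exp_nat_mul]
  rw [show ((2 : ℕ) : ℂ) * ((1 / 2 : ℂ) * Complex.log w) = Complex.log w by push_cast; ring]
  exact Complex.exp_log hw

lemma csqrt_re (w : ℂ) : (csqrt w).re
    = Real.exp (1 / 2 * Real.log ‖w‖) * Real.cos (w.arg / 2) := by
  rw [csqrt, Complex.exp_re]
  have h1 : ((1 / 2 : ℂ) * Complex.log w).re = 1 / 2 * Real.log ‖w‖ := by
    simp [Complex.mul_re, Complex.log_re, Complex.log_im]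
  have h2 : ((1 / 2 : ℂ) * Complex.log w).im = w.arg / 2 := by
    simp [Complex.mul_im, Complex.log_re, Complex.log_im]
    ring
  rw [h1, h2]

lemma csqrt_im (w : ℂ) : (csqrt w).im
    = Real.exp (1 / 2 * Real.log ‖w‖) * Real.sin (w.arg / 2) := by
  rw [csqrt, Complex.exp_im]
  have h1 : ((1 / 2 : ℂ) * Complex.log w).re = 1 / 2 * Real.log ‖w‖ := by
    simp [Complex.mul_re, Complex.log_re, Complex.log_im]
  have h2 : ((1 / 2 : ℂ) * Complex.log w).im = w.arg / 2 := by
    simp [Complex.mul_im, Complex.log_re, Complex.log_im]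
    ring
  rw [h1, h2]

lemma csqrt_quadrant_pos {w : ℂ} (hw : 0 < w.im) : 0 < (csqrt w).re ∧ 0 < (csqrt w).im := by
  have h1 : 0 < w.arg := by
    rcases lt_or_eq_of_le (Complex.arg_nonneg_iff.2 hw.le) with h | h
    · exact h
    · exact absurd (Complex.arg_eq_zero_iff.1 h.symm).2 (by linarith)
  have h2 : w.arg < Real.pi := by
    rcases lt_or_eq_of_le (Complex.arg_le_pi w) with h | h
    · exact h
    · exact absurd (Complex.arg_eq_pi_iff.1 h).2 (by linarith)
  have hpi := Real.pi_pos
  refine ⟨?_, ?_⟩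
  · rw [csqrt_re]
    exact mul_pos (Real.exp_pos _) (Real.cos_pos_of_mem_Ioo ⟨by linarith, by linarith⟩)
  · rw [csqrt_im]
    exact mul_pos (Real.exp_pos _) (Real.sin_pos_of_pos_of_lt_pi (by linarith) (by linarith))

lemma csqrt_quadrant_neg {w : ℂ} (hw : w.im < 0) : 0 < (csqrt w).re ∧ (csqrt w).im < 0 := by
  have h1 : w.arg < 0 := Complex.arg_neg_iff.2 hw
  have h2 : -Real.pi < w.arg := Complex.neg_pi_lt_arg w
  have hpi := Real.pi_pos
  refine ⟨?_, ?_⟩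
  · rw [csqrt_re]
    exact mul_pos (Real.exp_pos _) (Real.cos_pos_of_mem_Ioo ⟨by linarith, by linarith⟩)
  · rw [csqrt_im]
    exact mul_neg_of_pos_of_neg (Real.exp_pos _)
      (Real.sin_neg_of_neg_of_neg_pi_lt (by linarith) (by linarith))

lemma csqrt_ofReal_mul {t : ℝ} (ht : 0 < t) {v : ℂ} (hv : v ≠ 0) :
    csqrt ((t : ℂ) * v) = (Real.sqrt t : ℂ) * csqrt v := by
  rw [csqrt, csqrt, Complex.log_ofReal_mul ht hv, mul_add, Complex.exp_add]
  congr 1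
  rw [show (1 / 2 : ℂ) * (Real.log t : ℂ) = ((Real.log t / 2 : ℝ) : ℂ) by push_cast; ring]
  rw [← Complex.ofReal_exp]
  congr 1
  rw [Real.sqrt_eq_rpow, Real.rpow_def_of_pos ht]
  ring_nf

lemma rker_eq_aux {h : ℝ} {z : ℂ}
    (hu0 : Complex.I * ((h / 2 : ℂ) * csqrt z) + csqrt (1 - ((h / 2 : ℂ) * csqrt z) ^ 2) ≠ 0)
    (k : ℤ) :
    rker h z k = (Complex.I / (csqrt z * csqrt (4 / (h : ℂ) ^ 2 - z))) *
      ((Complex.I * ((h / 2 : ℂ) * csqrt z) + csqrt (1 - ((h / 2 : ℂ) * csqrt z) ^ 2)) ^ 2)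
        ^ k.natAbs := by
  set u : ℂ := Complex.I * ((h / 2 : ℂ) * csqrt z) + csqrt (1 - ((h / 2 : ℂ) * csqrt z) ^ 2)
    with hudef
  have hcast : (2 : ℂ) * Complex.I * ((|k| : ℤ) : ℂ) * (-Complex.I * Complex.log u)
      = ((2 * k.natAbs : ℕ) : ℂ) * Complex.log u := by
    have habs : ((|k| : ℤ) : ℂ) = (k.natAbs : ℂ) := by
      rw [Int.abs_eq_natAbs, Int.cast_natCast]
    rw [habs]
    push_cast
    linear_combination (-2 * (k.natAbs : ℂ) * Complex.log u) * Complex.I_sq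
  rw [rker, carcsin, ← hudef, hcast, Complex.exp_nat_mul, Complex.exp_log hu0, pow_mul]
  ring

lemma rker_core {h : ℝ} {z : ℂ} (hh : 0 < h) (hz : 0 < z.im) :
    ∃ C q : ℂ, ‖q‖ < 1 ∧ (∀ k : ℤ, rker h z k = C * q ^ k.natAbs) ∧
      (∀ k : ℤ, ((h : ℂ) ^ 2)⁻¹ * (2 * rker h z k - rker h z (k + 1) - rker h z (k - 1))
        - z * rker h z k = if k = 0 then 1 else 0) := by
  have hh0 : (h : ℂ) ≠ 0 := Complex.ofReal_ne_zero.2 hh.ne'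
  have hz0 : z ≠ 0 := fun hzz => by simp [hzz] at hz
  set Z : ℂ := csqrt z with hZdef
  have hZ0 : Z ≠ 0 := csqrt_ne_zero z
  have hZ2 : Z ^ 2 = z := csqrt_sq hz0
  obtain ⟨hZre, hZim⟩ := csqrt_quadrant_pos hz
  set s : ℂ := (h / 2 : ℂ) * Z with hsdef
  have hsre : 0 < s.re := by
    rw [hsdef, show ((h : ℂ) / 2) = (((h / 2 : ℝ)) : ℂ) by push_cast; ring,
      Complex.re_ofReal_mul]
    exact mul_pos (by linarith) hZre
  have hsim : 0 < s.im := by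
    rw [hsdef, show ((h : ℂ) / 2) = (((h / 2 : ℝ)) : ℂ) by push_cast; ring,
      Complex.im_ofReal_mul]
    exact mul_pos (by linarith) hZim
  have hwim : (1 - s ^ 2).im < 0 := by
    have : (s ^ 2).im = s.re * s.im + s.im * s.re := by
      rw [pow_two, Complex.mul_im]
    simp only [Complex.sub_im, Complex.one_im, this]
    nlinarith
  have hw0 : (1 : ℂ) - s ^ 2 ≠ 0 := fun hE => by rw [hE] at hwim; simp at hwim
  set a : ℂ := csqrt (1 - s ^ 2) with hadef
  obtain ⟨hare, haim⟩ := csqrt_quadrant_neg hwim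
  have ha2 : a ^ 2 = 1 - s ^ 2 := csqrt_sq hw0
  set v : ℂ := 4 / (h : ℂ) ^ 2 - z with hvdef
  have hvim : v.im < 0 := by
    have h4 : ((4 / (h : ℂ) ^ 2)).im = 0 := by
      rw [show (4 / (h : ℂ) ^ 2) = (((4 / h ^ 2 : ℝ)) : ℂ) by push_cast; ring]
      exact Complex.ofReal_im _
    rw [hvdef, Complex.sub_im, h4]
    linarith
  have hv0 : v ≠ 0 := fun hE => by rw [hE] at hvim; simp at hvim
  set V : ℂ := csqrt v with hVdef
  have hV0 : V ≠ 0 := csqrt_ne_zero v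
  have hV2 : V ^ 2 = v := csqrt_sq hv0
  have hwv : (1 : ℂ) - s ^ 2 = (((h / 2) ^ 2 : ℝ) : ℂ) * v := by
    have h4 : ((h : ℂ) ^ 2 / 4) * (4 / (h : ℂ) ^ 2) = 1 := by field_simp
    rw [hvdef, hsdef]
    push_cast
    linear_combination (-1 : ℂ) * h4 - (h : ℂ) ^ 2 / 4 * hZ2
  have haV : a = ((h / 2 : ℝ) : ℂ) * V := by
    rw [hadef, hwv, csqrt_ofReal_mul (by positivity) hv0, Real.sqrt_sq (by positivity)]
  have h4 : ((h : ℂ) ^ 2 / 4) * (4 / (h : ℂ) ^ 2) = 1 := by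
    field_simp
  have hone : ((h : ℂ) ^ 2 / 4) * (V ^ 2 + Z ^ 2) = 1 := by
    linear_combination (h : ℂ) ^ 2 / 4 * hV2 + (h : ℂ) ^ 2 / 4 * hvdef + h4
      + (h : ℂ) ^ 2 / 4 * hZ2
  set u : ℂ := Complex.I * s + a with hudef
  set B : ℂ := a - Complex.I * s with hBdef
  have huB : u * B = 1 := by
    rw [hudef, hBdef]
    linear_combination ha2 - s ^ 2 * Complex.I_sq
  have hu0 : u ≠ 0 := left_ne_zero_of_mul_eq_one huB
  set q : ℂ := u ^ 2 with hqdef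
  have husum : u ^ 2 + B ^ 2 = 2 - (h : ℂ) ^ 2 * z := by
    rw [hudef, hBdef]
    linear_combination 2 * ha2 + 2 * s ^ 2 * Complex.I_sq
      - 4 * (s + (h : ℂ) / 2 * Z) * hsdef - (h : ℂ) ^ 2 * hZ2
  have hrec : (h : ℂ) ^ 2 * z * q = 2 * q - q ^ 2 - 1 := by
    rw [hqdef]
    linear_combination (u ^ 2) * husum - (u * B + 1) * huB
  have habs : ‖q‖ < 1 := by
    have h1 : Complex.normSq u * Complex.normSq B = 1 := by
      rw [← Complex.normSq_mul, huB, Complex.normSq_one]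
    have h2 : Complex.normSq u < Complex.normSq B := by
      rw [hudef, hBdef]
      simp only [Complex.normSq_apply, Complex.add_re, Complex.add_im, Complex.sub_re,
        Complex.sub_im, Complex.mul_re, Complex.mul_im, Complex.I_re, Complex.I_im]
      nlinarith
    have h3 : 0 < Complex.normSq u := Complex.normSq_pos.2 hu0
    have h4 : Complex.normSq u < 1 := by nlinarith
    calc ‖q‖ = ‖u‖ ^ 2 := by rw [hqdef, norm_pow]
      _ = Complex.normSq u := Complex.sq_norm u
      _ < 1 := h4
  set C : ℂ := Complex.I / (Z * V) with hCdef
  have hrk : ∀ k : ℤ, rker h z k = C * q ^ k.natAbs := fun k => rker_eq_aux hu0 k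
  refine ⟨C, q, habs, hrk, ?_⟩
  have keyk : ∀ i : ℕ, ((h : ℂ) ^ 2)⁻¹ * (2 * (C * q ^ (i + 1)) - C * q ^ (i + 2) - C * q ^ i)
      - z * (C * q ^ (i + 1)) = 0 := by
    intro i
    have h2' : 2 * (C * q ^ (i + 1)) - C * q ^ (i + 2) - C * q ^ i
        = (h : ℂ) ^ 2 * (z * (C * q ^ (i + 1))) := by
      linear_combination (-(C * q ^ i)) * hrec
    rw [h2', inv_mul_cancel_left₀ (pow_ne_zero 2 hh0)]
    ring
  have key0 : ((h : ℂ) ^ 2)⁻¹ * (2 * (C * q ^ 0) - C * q ^ 1 - C * q ^ 1)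
      - z * (C * q ^ 0) = 1 := by
    have e1 : q = ((h : ℂ) ^ 2 / 4) * (Complex.I * Z + V) ^ 2 := by
      rw [hqdef, hudef, haV, hsdef]
      push_cast
      ring
    have key2 : (2 - 2 * q) * Complex.I = (h : ℂ) ^ 2 * (Z * V + z * Complex.I) := by
      rw [e1]
      linear_combination (-2 * Complex.I) * hone
        + (-(h : ℂ) ^ 2 / 2 * Complex.I * Z ^ 2 - (h : ℂ) ^ 2 * Z * V) * Complex.I_sq
        + ((h : ℂ) ^ 2 * Complex.I) * hZ2
    have hZV : Z * V ≠ 0 := mul_ne_zero hZ0 hV0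
    have expand : C * (Z * V) = Complex.I := by
      rw [hCdef]; field_simp
    have hG : (2 * C - C * q - C * q - (h : ℂ) ^ 2 * (1 + z * C)) * (Z * V) = 0 := by
      linear_combination (2 - 2 * q - (h : ℂ) ^ 2 * z) * expand + key2
    have hG0 : 2 * C - C * q - C * q = (h : ℂ) ^ 2 * (1 + z * C) := by
      rcases mul_eq_zero.1 hG with hE | hE
      · linear_combination hE
      · exact absurd hE hZV
    calc ((h : ℂ) ^ 2)⁻¹ * (2 * (C * q ^ 0) - C * q ^ 1 - C * q ^ 1) - z * (C * q ^ 0)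
        = ((h : ℂ) ^ 2)⁻¹ * ((h : ℂ) ^ 2 * (1 + z * C)) - z * C := by
          rw [pow_zero, pow_one, mul_one, hG0]
      _ = 1 := by rw [inv_mul_cancel_left₀ (pow_ne_zero 2 hh0)]; ring
  intro k
  rcases lt_trichotomy k 0 with hk | rfl | hk
  · rw [if_neg hk.ne]
    have e1 : k.natAbs = (k + 1).natAbs + 1 := by omega
    have e2 : (k - 1).natAbs = (k + 1).natAbs + 2 := by omega
    rw [hrk k, hrk (k + 1), hrk (k - 1), e1, e2]
    linear_combination keyk ((k + 1).natAbs)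
  · rw [if_pos rfl]
    have e0 : (0 : ℤ).natAbs = 0 := rfl
    have e1 : ((0 : ℤ) + 1).natAbs = 1 := rfl
    have e2 : ((0 : ℤ) - 1).natAbs = 1 := rfl
    rw [hrk 0, hrk (0 + 1), hrk (0 - 1), e0, e1, e2]
    exact key0
  · rw [if_neg hk.ne']
    have e1 : k.natAbs = (k - 1).natAbs + 1 := by omega
    have e2 : (k + 1).natAbs = (k - 1).natAbs + 2 := by omega
    rw [hrk k, hrk (k + 1), hrk (k - 1), e1, e2]
    linear_combination keyk ((k - 1).natAbs)

lemma rker_identity {h : ℝ} {z : ℂ} (hh : 0 < h) (hz : 0 < z.im) (k : ℤ) :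
    ((h : ℂ) ^ 2)⁻¹ * (2 * rker h z k - rker h z (k + 1) - rker h z (k - 1))
      - z * rker h z k = if k = 0 then 1 else 0 := by
  obtain ⟨C, q, _, _, hI⟩ := rker_core hh hz
  exact hI k

lemma rker_abs_summable {h : ℝ} {z : ℂ} (hh : 0 < h) (hz : 0 < z.im) :
    Summable fun k : ℤ => ‖rker h z k‖ := by
  obtain ⟨C, q, hq, hrk, _⟩ := rker_core hh hz
  have heq : ∀ k : ℤ, ‖rker h z k‖ = ‖C‖ * ‖q‖ ^ k.natAbs := by
    intro k; rw [hrk k, norm_mul, norm_pow]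
  rw [show (fun k : ℤ => ‖rker h z k‖) = fun k : ℤ => ‖C‖ * ‖q‖ ^ k.natAbs
    from funext heq]
  apply Summable.mul_left
  have h0 : Summable (fun n : ℕ => ‖q‖ ^ n) :=
    summable_geometric_of_lt_one (by positivity) hq
  apply Summable.of_nat_of_neg
  · simpa using h0
  · simpa using h0

section OpPart

open scoped ENNReal

local notation "ℓ2" => lp (fun _ : ℤ => ℂ) 2

lemma shift_mem (a : ℤ) (φ : ℓ2) : Memℓp (fun n : ℤ => φ (n - a)) 2 := by
  apply memℓp_gen
  have h1 : Summable fun i : ℤ => ‖φ i‖ ^ (2 : ℝ≥0∞).toReal :=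
    (lp.memℓp φ).summable (by norm_num)
  have h2 : Summable ((fun i : ℤ => ‖φ i‖ ^ (2 : ℝ≥0∞).toReal) ∘ (Equiv.subRight a)) :=
    (Equiv.summable_iff (Equiv.subRight a)).2 h1
  simpa [Function.comp_def] using h2

noncomputable def shiftLM (a : ℤ) : ℓ2 →ₗ[ℂ] ℓ2 where
  toFun φ := ⟨fun n => φ (n - a), shift_mem a φ⟩
  map_add' φ ψ := by
    apply lp.ext
    funext n
    simp [lp.coeFn_add]
    rfl
  map_smul' c φ := by
    apply lp.ext
    funext n
    simp [lp.coeFn_smul]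

lemma shift_norm_le (a : ℤ) (φ : ℓ2) : ‖shiftLM a φ‖ ≤ 1 * ‖φ‖ := by
  rw [one_mul]
  rw [lp.norm_eq_tsum_rpow (by norm_num : (0:ℝ) < (2 : ℝ≥0∞).toReal) φ,
    lp.norm_eq_tsum_rpow (by norm_num : (0:ℝ) < (2 : ℝ≥0∞).toReal) (shiftLM a φ)]
  have : (∑' n : ℤ, ‖(shiftLM a φ) n‖ ^ (2 : ℝ≥0∞).toReal)
      = ∑' i : ℤ, ‖φ i‖ ^ (2 : ℝ≥0∞).toReal :=
    (Equiv.subRight a).tsum_eq (fun i : ℤ => ‖φ i‖ ^ (2 : ℝ≥0∞).toReal)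
  rw [this]

noncomputable def shiftCLM (a : ℤ) : ℓ2 →L[ℂ] ℓ2 :=
  LinearMap.mkContinuous (shiftLM a) 1 (shift_norm_le a)

lemma shiftCLM_apply (a : ℤ) (φ : ℓ2) (n : ℤ) : shiftCLM a φ n = φ (n - a) := rfl

lemma shiftCLM_norm_le (a : ℤ) : ‖shiftCLM a‖ ≤ 1 :=
  LinearMap.mkContinuous_norm_le _ zero_le_one _

noncomputable def evalCLM (n : ℤ) : ℓ2 →L[ℂ] ℂ :=
  LinearMap.mkContinuous
    { toFun := fun φ => φ n,
      map_add' := fun φ ψ => by simp [lp.coeFn_add],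
      map_smul' := fun c φ => by simp [lp.coeFn_smul] } 1
    (fun φ => by rw [one_mul]; exact lp.norm_apply_le_norm (by norm_num) φ n)

noncomputable def Rop (h : ℝ) (z : ℂ) : ℓ2 →L[ℂ] ℓ2 :=
  ∑' k : ℤ, rker h z k • shiftCLM k

set_option maxHeartbeats 1000000 in
lemma Rop_summable {h : ℝ} {z : ℂ} (hh : 0 < h) (hz : 0 < z.im) :
    Summable (fun k : ℤ => rker h z k • shiftCLM k) := by
  apply Summable.of_norm_bounded (rker_abs_summable hh hz)
  intro k
  refine le_trans (ContinuousLinearMap.opNorm_smul_le _ _) ?_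
  calc ‖rker h z k‖ * ‖shiftCLM k‖ ≤ ‖rker h z k‖ * 1 :=
        mul_le_mul_of_nonneg_left (shiftCLM_norm_le k) (norm_nonneg _)
    _ = ‖rker h z k‖ := mul_one _

lemma Rop_apply {h : ℝ} {z : ℂ} (hh : 0 < h) (hz : 0 < z.im) (φ : ℓ2) (n : ℤ) :
    Rop h z φ n = ∑' k : ℤ, rker h z k * φ (n - k) := by
  have hs := Rop_summable hh hz
  have h1 : Rop h z φ = ∑' k : ℤ, (rker h z k • shiftCLM k) φ := by
    rw [Rop]
    exact ContinuousLinearMap.map_tsum (ContinuousLinearMap.apply ℂ ℓ2 φ) hs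
  have h2 : Summable (fun k : ℤ => (rker h z k • shiftCLM k) φ) :=
    hs.map (ContinuousLinearMap.apply ℂ ℓ2 φ) (ContinuousLinearMap.apply ℂ ℓ2 φ).continuous
  calc Rop h z φ n = evalCLM n (Rop h z φ) := rfl
    _ = ∑' k : ℤ, evalCLM n ((rker h z k • shiftCLM k) φ) := by
        rw [h1]
        exact ContinuousLinearMap.map_tsum (evalCLM n) h2
    _ = ∑' k : ℤ, rker h z k * φ (n - k) := by
        apply tsum_congr
        intro k
        rw [ContinuousLinearMap.smul_apply, map_smul, smul_eq_mul]
        rfl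

lemma Rop_formula {h : ℝ} {z : ℂ} (hh : 0 < h) (hz : 0 < z.im) (φ : ℓ2) (n : ℤ) :
    Rop h z φ n = ∑' m : ℤ, rker h z (n - m) * φ m := by
  rw [Rop_apply hh hz φ n]
  rw [← (Equiv.subLeft n).tsum_eq (fun m : ℤ => rker h z (n - m) * φ m)]
  congr 1
  funext k
  simp only [Equiv.subLeft_apply]
  rw [sub_sub_cancel]

lemma conv_summable {h : ℝ} {z : ℂ} (hh : 0 < h) (hz : 0 < z.im) (x : ℤ)
    {g : ℤ → ℂ} {Bd : ℝ} (hB : ∀ m, ‖g m‖ ≤ Bd) :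
    Summable fun m : ℤ => ‖rker h z (x - m) * g m‖ := by
  have h0 : Summable ((fun k : ℤ => ‖rker h z k‖) ∘ (Equiv.subLeft x)) :=
    (Equiv.summable_iff (Equiv.subLeft x)).2 (rker_abs_summable hh hz)
  have h1 : Summable fun m : ℤ => ‖rker h z (x - m)‖ := by
    simpa [Function.comp_def] using h0
  apply Summable.of_nonneg_of_le (fun m => norm_nonneg _) (fun m => ?_) (h1.mul_right Bd)
  rw [norm_mul]
  exact mul_le_mul_of_nonneg_left (hB m) (norm_nonneg _)

lemma conv_delta {h : ℝ} {z : ℂ} (hh : 0 < h) (hz : 0 < z.im) (φ : ℓ2) (n : ℤ) :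
    ((h : ℂ) ^ 2)⁻¹ * (2 * (∑' m : ℤ, rker h z (n - m) * φ m)
        - (∑' m : ℤ, rker h z (n + 1 - m) * φ m)
        - (∑' m : ℤ, rker h z (n - 1 - m) * φ m))
      - z * (∑' m : ℤ, rker h z (n - m) * φ m) = φ n := by
  have hbφ : ∀ m : ℤ, ‖φ m‖ ≤ ‖φ‖ := fun m => lp.norm_apply_le_norm (by norm_num) φ m
  have S : ∀ x : ℤ, Summable fun m : ℤ => rker h z (x - m) * φ m := fun x =>
    Summable.of_norm (conv_summable hh hz x hbφ)
  have hA := (S n).hasSum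
  have hB := (S (n + 1)).hasSum
  have hC := (S (n - 1)).hasSum
  have key : HasSum
      (fun m : ℤ => ((h : ℂ) ^ 2)⁻¹ * (2 * (rker h z (n - m) * φ m)
          - rker h z (n + 1 - m) * φ m - rker h z (n - 1 - m) * φ m)
        - z * (rker h z (n - m) * φ m))
      (((h : ℂ) ^ 2)⁻¹ * (2 * (∑' m : ℤ, rker h z (n - m) * φ m)
          - (∑' m : ℤ, rker h z (n + 1 - m) * φ m)
          - (∑' m : ℤ, rker h z (n - 1 - m) * φ m))
        - z * (∑' m : ℤ, rker h z (n - m) * φ m)) := by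
    exact (((((hA.mul_left 2).sub hB).sub hC).mul_left (((h : ℂ) ^ 2)⁻¹)).sub (hA.mul_left z))
  have hfun : (fun m : ℤ => ((h : ℂ) ^ 2)⁻¹ * (2 * (rker h z (n - m) * φ m)
          - rker h z (n + 1 - m) * φ m - rker h z (n - 1 - m) * φ m)
        - z * (rker h z (n - m) * φ m))
      = fun m : ℤ => if m = n then φ n else 0 := by
    funext m
    have e1 : n + 1 - m = n - m + 1 := by ring
    have e2 : n - 1 - m = n - m - 1 := by ring
    rw [e1, e2]
    have hid := rker_identity hh hz (n - m)
    rcases eq_or_ne m n with rfl | hm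
    · rw [if_pos rfl]
      rw [if_pos (by omega : m - m = 0)] at hid
      linear_combination (φ m) * hid
    · rw [if_neg hm]
      rw [if_neg (by omega : ¬ n - m = 0)] at hid
      linear_combination (φ m) * hid
  rw [hfun] at key
  exact ((hasSum_ite_eq n (φ n)).unique key).symm

lemma conv_id2 {h : ℝ} {z : ℂ} (hh : 0 < h) (hz : 0 < z.im) (φ : ℓ2) (n : ℤ) :
    (∑' m : ℤ, rker h z (n - m) *
      (((h : ℂ) ^ 2)⁻¹ * (2 * φ m - φ (m + 1) - φ (m - 1)) - z * φ m)) = φ n := by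
  have hbφ : ∀ m : ℤ, ‖φ m‖ ≤ ‖φ‖ := fun m => lp.norm_apply_le_norm (by norm_num) φ m
  have Sa : Summable fun m : ℤ => rker h z (n - m) * φ m :=
    Summable.of_norm (conv_summable hh hz n hbφ)
  have Sb : Summable fun m : ℤ => rker h z (n - m) * φ (m + 1) :=
    Summable.of_norm (conv_summable hh hz n (g := fun m => φ (m + 1)) (fun m => hbφ (m + 1)))
  have Sc : Summable fun m : ℤ => rker h z (n - m) * φ (m - 1) :=
    Summable.of_norm (conv_summable hh hz n (g := fun m => φ (m - 1)) (fun m => hbφ (m - 1)))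
  have hsplit : (fun m : ℤ => rker h z (n - m) *
      (((h : ℂ) ^ 2)⁻¹ * (2 * φ m - φ (m + 1) - φ (m - 1)) - z * φ m))
      = fun m : ℤ => ((h : ℂ) ^ 2)⁻¹ * (2 * (rker h z (n - m) * φ m)
          - rker h z (n - m) * φ (m + 1) - rker h z (n - m) * φ (m - 1))
        - z * (rker h z (n - m) * φ m) := by
    funext m
    ring
  have hval : HasSum (fun m : ℤ => ((h : ℂ) ^ 2)⁻¹ * (2 * (rker h z (n - m) * φ m)
          - rker h z (n - m) * φ (m + 1) - rker h z (n - m) * φ (m - 1))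
        - z * (rker h z (n - m) * φ m))
      (((h : ℂ) ^ 2)⁻¹ * (2 * (∑' m : ℤ, rker h z (n - m) * φ m)
          - (∑' m : ℤ, rker h z (n - m) * φ (m + 1))
          - (∑' m : ℤ, rker h z (n - m) * φ (m - 1)))
        - z * (∑' m : ℤ, rker h z (n - m) * φ m)) :=
    ((((Sa.hasSum.mul_left 2).sub Sb.hasSum).sub Sc.hasSum).mul_left
      (((h : ℂ) ^ 2)⁻¹)).sub (Sa.hasSum.mul_left z)
  have hBval : (∑' m : ℤ, rker h z (n - m) * φ (m + 1))
      = ∑' m : ℤ, rker h z (n + 1 - m) * φ m := by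
    have he := (Equiv.subRight (1 : ℤ)).tsum_eq (fun m : ℤ => rker h z (n - m) * φ (m + 1))
    simp only [Equiv.subRight_apply] at he
    rw [← he]
    congr 1
    funext m
    rw [show m - 1 + 1 = m by ring, show n - (m - 1) = n + 1 - m by ring]
  have hCval : (∑' m : ℤ, rker h z (n - m) * φ (m - 1))
      = ∑' m : ℤ, rker h z (n - 1 - m) * φ m := by
    have he := (Equiv.addRight (1 : ℤ)).tsum_eq (fun m : ℤ => rker h z (n - m) * φ (m - 1))
    simp only [Equiv.coe_addRight] at he
    rw [← he]
    congr 1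
    funext m
    rw [show m + 1 - 1 = m by ring, show n - (m + 1) = n - 1 - m by ring]
  rw [hsplit]
  rw [hval.tsum_eq, hBval, hCval]
  have := conv_delta hh hz φ n
  linear_combination this

end OpPart

theorem stmt_4 (h : ℝ) (hh : 0 < h) (z : ℂ) (hz : 0 < z.im)
    (H : lp (fun _ : ℤ => ℂ) 2 →L[ℂ] lp (fun _ : ℤ => ℂ) 2)
    (hH : ∀ (φ : lp (fun _ : ℤ => ℂ) 2) (n : ℤ),
      H φ n = ((h : ℂ) ^ 2)⁻¹ * (2 * φ n - φ (n + 1) - φ (n - 1))) :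
    ∃ R : lp (fun _ : ℤ => ℂ) 2 →L[ℂ] lp (fun _ : ℤ => ℂ) 2,
      (H - z • 1) ∘L R = 1 ∧ R ∘L (H - z • 1) = 1 ∧
      ∀ (φ : lp (fun _ : ℤ => ℂ) 2) (n : ℤ),
        Summable (fun m : ℤ => ‖rker h z (n - m) * φ m‖) ∧
        R φ n = ∑' m : ℤ, rker h z (n - m) * φ m := by
  have hbφ : ∀ (φ : lp (fun _ : ℤ => ℂ) 2) (m : ℤ), ‖φ m‖ ≤ ‖φ‖ :=
    fun φ m => lp.norm_apply_le_norm (by norm_num) φ m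
  have hsub : ∀ (ψ : lp (fun _ : ℤ => ℂ) 2) (m : ℤ), ((H - z • 1) ψ) m = H ψ m - z * ψ m := by
    intro ψ m
    rw [ContinuousLinearMap.sub_apply, ContinuousLinearMap.smul_apply,
      ContinuousLinearMap.one_apply, lp.coeFn_sub, Pi.sub_apply, lp.coeFn_smul, Pi.smul_apply,
      smul_eq_mul]
  refine ⟨Rop h z, ?_, ?_, fun φ n => ⟨conv_summable hh hz n (hbφ φ), Rop_formula hh hz φ n⟩⟩
  · apply ContinuousLinearMap.ext
    intro φ
    apply lp.ext
    funext n
    rw [ContinuousLinearMap.comp_apply]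
    calc ((H - z • 1) (Rop h z φ)) n
        = H (Rop h z φ) n - z * (Rop h z φ) n := hsub _ n
      _ = ((h : ℂ) ^ 2)⁻¹ * (2 * Rop h z φ n - Rop h z φ (n + 1) - Rop h z φ (n - 1))
          - z * Rop h z φ n := by rw [hH]
      _ = ((h : ℂ) ^ 2)⁻¹ * (2 * (∑' m : ℤ, rker h z (n - m) * φ m)
            - (∑' m : ℤ, rker h z (n + 1 - m) * φ m)
            - (∑' m : ℤ, rker h z (n - 1 - m) * φ m))
          - z * (∑' m : ℤ, rker h z (n - m) * φ m) := by
            rw [Rop_formula hh hz φ n, Rop_formula hh hz φ (n + 1), Rop_formula hh hz φ (n - 1)]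
      _ = φ n := conv_delta hh hz φ n
      _ = (1 : lp (fun _ : ℤ => ℂ) 2 →L[ℂ] lp (fun _ : ℤ => ℂ) 2) φ n := rfl
  · apply ContinuousLinearMap.ext
    intro φ
    apply lp.ext
    funext n
    rw [ContinuousLinearMap.comp_apply]
    calc Rop h z ((H - z • 1) φ) n
        = ∑' m : ℤ, rker h z (n - m) * (((H - z • 1) φ) m) :=
          Rop_formula hh hz ((H - z • 1) φ) n
      _ = ∑' m : ℤ, rker h z (n - m) *
            (((h : ℂ) ^ 2)⁻¹ * (2 * φ m - φ (m + 1) - φ (m - 1)) - z * φ m) := by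
            apply tsum_congr
            intro m
            rw [hsub, hH]
      _ = φ n := conv_id2 hh hz φ n
      _ = (1 : lp (fun _ : ℤ => ℂ) 2 →L[ℂ] lp (fun _ : ℤ => ℂ) 2) φ n := rfl
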